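/- Noiseless vector Kaczmarz descent: let A ∈ ℝ^{1×n} be a nonzero row vector, b ∈ ℝ, and f : ℝⁿ → ℝ be α-strongly convex. Given z̄ ∈ ℝⁿ and x̄ = ∇f*(z̄), define z = z̄ + t·(b − Ax̄)/‖A‖₂²·Aᵀ and x = ∇f*(z). If 0 < t < 2α, then for every h with Ah = b, D_{f,z}(x, h) ≤ D_{f,z̄}(x̄, h) − (t/‖A‖₂²)(1 − t/(2α))·|b − Ax̄|². -/

import Mathlib

open RealInnerProductSpace

/-- The convex (Fenchel) conjugate `f*(z) = sup_x ⟪z,x⟫ - f(x)`. -/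
noncomputable def fconj {n : ℕ} (f : EuclideanSpace ℝ (Fin n) → ℝ)
    (z : EuclideanSpace ℝ (Fin n)) : ℝ :=
  ⨆ x, ⟪z, x⟫ - f x

/-- Bregman distance `D_{f,z}(∇f*(z), h) = f(h) + f*(z) - ⟪z, h⟫`. -/
noncomputable def breg {n : ℕ} (f : EuclideanSpace ℝ (Fin n) → ℝ)
    (z h : EuclideanSpace ℝ (Fin n)) : ℝ :=
  f h + fconj f z - ⟪z, h⟫

section aux

open Filter Asymptotics Set

variable {n : ℕ}

local notation "E" => EuclideanSpace ℝ (Fin n)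

/-- Strong convexity is preserved under subtracting a linear functional. -/
lemma sc_shift {α : ℝ} {f : E → ℝ} (hf : StrongConvexOn Set.univ α f) (z : E) :
    StrongConvexOn Set.univ α (fun x => f x - ⟪z, x⟫) := by
  refine ⟨convex_univ, fun x _ y _ a b ha hb hab => ?_⟩
  have h := hf.2 (Set.mem_univ x) (Set.mem_univ y) ha hb hab
  simp only [smul_eq_mul] at h
  simp only [smul_eq_mul, inner_add_right, real_inner_smul_right]
  linarith

/-- A strongly convex function on `ℝⁿ` is continuous. -/
lemma sc_continuous {α : ℝ} {f : E → ℝ} (hf : StrongConvexOn Set.univ α f) :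
    Continuous f := by
  have h1 : ConvexOn ℝ Set.univ fun x : E => f x - α / 2 * ‖x‖ ^ 2 :=
    strongConvexOn_iff_convex.mp hf
  have h2 : Continuous fun x : E => f x - α / 2 * ‖x‖ ^ 2 :=
    continuousOn_univ.mp (h1.continuousOn isOpen_univ)
  have h3 : Continuous fun x : E => α / 2 * ‖x‖ ^ 2 :=
    continuous_const.mul (continuous_norm.pow 2)
  have := h2.add h3
  convert this using 1
  ext x
  simp

/-- A continuous convex function on `ℝⁿ` has an affine lower bound outside the unit ball. -/
lemma convex_linear_lower {q : E → ℝ} (hq : ConvexOn ℝ Set.univ q) (hqc : Continuous q) :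
    ∃ C D : ℝ, ∀ x : E, 1 ≤ ‖x‖ → C * ‖x‖ + D ≤ q x := by
  obtain ⟨u, hu, humin⟩ := (isCompact_closedBall (0 : E) 1).exists_isMinOn
    ⟨0, by simp⟩ hqc.continuousOn
  refine ⟨q u - q 0, q 0, fun x hx => ?_⟩
  have hr : (0:ℝ) < ‖x‖ := lt_of_lt_of_le one_pos hx
  have hinv : ‖x‖⁻¹ ≤ 1 := inv_le_one_of_one_le₀ hx
  have hmem : ‖x‖⁻¹ • x ∈ Metric.closedBall (0 : E) 1 := by
    simp [norm_smul, abs_of_pos (inv_pos.mpr hr), inv_mul_cancel₀ hr.ne']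
  have h5 : q u ≤ q (‖x‖⁻¹ • x) := humin hmem
  have hcv := hq.2 (Set.mem_univ x) (Set.mem_univ (0:E))
    (by positivity : (0:ℝ) ≤ ‖x‖⁻¹) (by linarith : (0:ℝ) ≤ 1 - ‖x‖⁻¹)
    (by ring : ‖x‖⁻¹ + (1 - ‖x‖⁻¹) = 1)
  simp only [smul_zero, add_zero, smul_eq_mul] at hcv
  have h6 : q u ≤ ‖x‖⁻¹ * q x + (1 - ‖x‖⁻¹) * q 0 := le_trans h5 hcv
  have h7 := mul_le_mul_of_nonneg_left h6 hr.le
  have e : ‖x‖ * (‖x‖⁻¹ * q x + (1 - ‖x‖⁻¹) * q 0) = q x + (‖x‖ - 1) * q 0 := by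
    field_simp
    try ring
  rw [e] at h7
  nlinarith

/-- A continuous strongly convex function attains its minimum. -/
lemma sc_exists_min {α : ℝ} (hα : 0 < α) {g : E → ℝ} (hg : StrongConvexOn Set.univ α g)
    (hgc : Continuous g) : ∃ x₀ : E, ∀ x, g x₀ ≤ g x := by
  have hq : ConvexOn ℝ Set.univ fun x : E => g x - α / 2 * ‖x‖ ^ 2 :=
    strongConvexOn_iff_convex.mp hg
  have hqc : Continuous fun x : E => g x - α / 2 * ‖x‖ ^ 2 :=
    hgc.sub (continuous_const.mul (continuous_norm.pow 2))
  obtain ⟨C, D, hCD⟩ := convex_linear_lower hq hqc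
  have hbound : ∀ x : E, 1 ≤ ‖x‖ → C * ‖x‖ + D ≤ g x - α / 2 * ‖x‖ ^ 2 := by
    intro x hx
    simpa using hCD x hx
  have hcoer : Tendsto g (cocompact E) atTop := by
    have hQ0 : Tendsto (fun r : ℝ => r * (α / 2 * r + C) + D) atTop atTop :=
      tendsto_atTop_add_const_right _ _
        (tendsto_id.atTop_mul_atTop₀
          (tendsto_atTop_add_const_right _ _
            (Tendsto.const_mul_atTop (by positivity) tendsto_id)))
    have hQ : Tendsto (fun r : ℝ => α / 2 * r ^ 2 + C * r + D) atTop atTop :=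
      hQ0.congr (fun r => by ring)
    refine tendsto_atTop_mono' (cocompact E) ?_ (hQ.comp tendsto_norm_cocompact_atTop)
    have hev : ∀ᶠ x : E in cocompact E, 1 ≤ ‖x‖ :=
      tendsto_norm_cocompact_atTop.eventually (eventually_ge_atTop 1)
    filter_upwards [hev] with x hx
    have h8 := hbound x hx
    simp only [Function.comp]
    linarith
  exact hgc.exists_forall_le hcoer

/-- Quadratic growth of a strongly convex function away from its minimizer. -/
lemma sc_min_growth {α : ℝ} (hα : 0 < α) {g : E → ℝ} (hg : StrongConvexOn Set.univ α g)
    {x₀ : E} (hmin : ∀ x, g x₀ ≤ g x) (y : E) :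
    g x₀ + α / 2 * ‖y - x₀‖ ^ 2 ≤ g y := by
  have key : ∀ lam : ℝ, lam ∈ Set.Ioo (0:ℝ) 1 →
      α / 2 * (1 - lam) * ‖y - x₀‖ ^ 2 ≤ g y - g x₀ := by
    rintro lam ⟨h0, h1⟩
    have h := hg.2 (Set.mem_univ y) (Set.mem_univ x₀)
      h0.le (by linarith : (0:ℝ) ≤ 1 - lam) (by ring : lam + (1 - lam) = 1)
    simp only [smul_eq_mul] at h
    have h2 := hmin (lam • y + (1 - lam) • x₀)
    have h4 : lam * (α / 2 * (1 - lam) * ‖y - x₀‖ ^ 2) ≤ lam * (g y - g x₀) := by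
      nlinarith
    exact (mul_le_mul_iff_right₀ h0).mp h4
  have hc : Tendsto (fun lam : ℝ => α / 2 * (1 - lam) * ‖y - x₀‖ ^ 2)
      (nhdsWithin 0 (Set.Ioi 0)) (nhds (α / 2 * ‖y - x₀‖ ^ 2)) := by
    have hcont : Continuous fun lam : ℝ => α / 2 * (1 - lam) * ‖y - x₀‖ ^ 2 := by
      continuity
    have h1 : Tendsto (fun lam : ℝ => α / 2 * (1 - lam) * ‖y - x₀‖ ^ 2)
        (nhds 0) (nhds (α / 2 * (1 - 0) * ‖y - x₀‖ ^ 2)) := hcont.tendsto 0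
    have h2 := h1.mono_left (nhdsWithin_le_nhds (s := Set.Ioi (0:ℝ)))
    simpa using h2
  have hev : ∀ᶠ lam in nhdsWithin (0:ℝ) (Set.Ioi 0),
      α / 2 * (1 - lam) * ‖y - x₀‖ ^ 2 ≤ g y - g x₀ := by
    filter_upwards [Ioo_mem_nhdsGT_of_mem (Set.mem_Ico.mpr ⟨le_refl (0:ℝ), one_pos⟩)]
      with lam hlam using key lam hlam
  have := le_of_tendsto hc hev
  linarith

end aux

theorem kaczmarz_vector_one_step_descent {n : ℕ} (α t : ℝ) (hα : 0 < α)
    (f : EuclideanSpace ℝ (Fin n) → ℝ)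
    (hf : StrongConvexOn Set.univ α f)
    (a : EuclideanSpace ℝ (Fin n)) (ha : a ≠ 0) (b : ℝ)
    (ht : 0 < t) (ht2 : t < 2 * α)
    (zb xb z x : EuclideanSpace ℝ (Fin n))
    (hxb : xb = gradient (fconj f) zb)
    (hz : z = zb + (t * (b - ⟪a, xb⟫) / ‖a‖ ^ 2) • a)
    (hx : x = gradient (fconj f) z) :
    ∀ h : EuclideanSpace ℝ (Fin n), ⟪a, h⟫ = b →
      breg f z h ≤ breg f zb h
        - (t / ‖a‖ ^ 2) * (1 - t / (2 * α)) * (b - ⟪a, xb⟫) ^ 2 := by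
  intro h hh
  have hcont : Continuous f := sc_continuous hf
  -- existence of a maximizer in the definition of `fconj f w`, for every `w`
  have hex : ∀ w : EuclideanSpace ℝ (Fin n),
      ∃ x₀, ∀ y, f x₀ - ⟪w, x₀⟫ ≤ f y - ⟪w, y⟫ :=
    fun w => sc_exists_min hα (sc_shift hf w)
      (hcont.sub (continuous_const.inner continuous_id))
  obtain ⟨x₀, hx₀⟩ := hex zb
  -- value of the conjugate at `zb`
  have hbdd0 : BddAbove (Set.range fun y : EuclideanSpace ℝ (Fin n) => ⟪zb, y⟫ - f y) := by
    refine ⟨⟪zb, x₀⟫ - f x₀, ?_⟩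
    rintro v ⟨y, rfl⟩
    show ⟪zb, y⟫ - f y ≤ ⟪zb, x₀⟫ - f x₀
    have := hx₀ y
    linarith
  have hzbv : fconj f zb = ⟪zb, x₀⟫ - f x₀ := by
    simp only [fconj]
    refine le_antisymm (ciSup_le fun y => ?_) (le_ciSup hbdd0 x₀)
    have := hx₀ y
    linarith
  -- quadratic growth at the minimizer `x₀` of `f - ⟪zb, ·⟫`
  have hgrow : ∀ y, (f x₀ - ⟪zb, x₀⟫) + α / 2 * ‖y - x₀‖ ^ 2 ≤ f y - ⟪zb, y⟫ :=
    fun y => sc_min_growth hα (sc_shift hf zb) hx₀ y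
  -- upper bound : descent lemma for the conjugate
  have hup : ∀ w : EuclideanSpace ℝ (Fin n),
      fconj f w ≤ fconj f zb + ⟪w - zb, x₀⟫ + ‖w - zb‖ ^ 2 / (2 * α) := by
    intro w
    rw [hzbv]
    simp only [fconj]
    refine ciSup_le fun y => ?_
    have h1 := hgrow y
    have h2 := real_inner_le_norm (w - zb) (y - x₀)
    have h3 : ‖w - zb‖ * ‖y - x₀‖ - α / 2 * ‖y - x₀‖ ^ 2 ≤ ‖w - zb‖ ^ 2 / (2 * α) := by
      rw [le_div_iff₀ (by positivity : (0:ℝ) < 2 * α)]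
      nlinarith [sq_nonneg (‖w - zb‖ - α * ‖y - x₀‖)]
    simp only [inner_sub_left, inner_sub_right] at h2 ⊢
    linarith
  -- lower bound : subgradient inequality for the conjugate
  have hlow : ∀ w : EuclideanSpace ℝ (Fin n),
      fconj f zb + ⟪w - zb, x₀⟫ ≤ fconj f w := by
    intro w
    obtain ⟨y₀, hy₀⟩ := hex w
    have hbddw : BddAbove (Set.range fun y : EuclideanSpace ℝ (Fin n) => ⟪w, y⟫ - f y) := by
      refine ⟨⟪w, y₀⟫ - f y₀, ?_⟩
      rintro v ⟨y, rfl⟩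
      show ⟪w, y⟫ - f y ≤ ⟪w, y₀⟫ - f y₀
      have := hy₀ y
      linarith
    have hle : ⟪w, x₀⟫ - f x₀ ≤ fconj f w := by
      simp only [fconj]
      exact le_ciSup hbddw x₀
    rw [hzbv]
    simp only [inner_sub_left] at *
    linarith
  -- the gradient of the conjugate at `zb` is `x₀`
  have hgrad : HasGradientAt (fconj f) x₀ zb := by
    rw [hasGradientAt_iff_hasFDerivAt, hasFDerivAt_iff_isLittleO,
      Asymptotics.isLittleO_iff]
    intro c hc
    have hev : ∀ᶠ w in nhds zb, ‖w - zb‖ ≤ 2 * α * c := by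
      filter_upwards [Metric.closedBall_mem_nhds zb (by positivity : (0:ℝ) < 2 * α * c)]
        with w hw
      simpa [dist_eq_norm] using hw
    filter_upwards [hev] with w hw
    rw [InnerProductSpace.toDual_apply_apply, Real.norm_eq_abs, abs_le]
    have hcomm : ⟪x₀, w - zb⟫ = ⟪w - zb, x₀⟫ := real_inner_comm _ _
    have h0 : (0:ℝ) ≤ c * ‖w - zb‖ := mul_nonneg hc.le (norm_nonneg _)
    have hq : ‖w - zb‖ ^ 2 / (2 * α) ≤ c * ‖w - zb‖ := by
      rw [div_le_iff₀ (by positivity : (0:ℝ) < 2 * α)]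
      nlinarith [mul_le_mul_of_nonneg_left hw (norm_nonneg (w - zb))]
    constructor
    · rw [hcomm]; linarith [hlow w]
    · rw [hcomm]; linarith [hup w]
  have hxbe : xb = x₀ := by rw [hxb, hgrad.gradient]
  -- algebraic bookkeeping
  have hna : (0:ℝ) < ‖a‖ := norm_pos_iff.mpr ha
  set c : ℝ := t * (b - ⟪a, xb⟫) / ‖a‖ ^ 2 with hc
  have hsz : z - zb = c • a := by rw [hz, add_sub_cancel_left]
  have e1 : ⟪z - zb, x₀⟫ = c * ⟪a, x₀⟫ := by rw [hsz, real_inner_smul_left]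
  have e2 : ⟪z, h⟫ = ⟪zb, h⟫ + c * b := by
    have h5 : ⟪z - zb, h⟫ = c * b := by rw [hsz, real_inner_smul_left, hh]
    have h6 : ⟪z - zb, h⟫ = ⟪z, h⟫ - ⟪zb, h⟫ := inner_sub_left _ _ _
    linarith
  have e3 : ‖z - zb‖ ^ 2 = c ^ 2 * ‖a‖ ^ 2 := by
    rw [hsz, norm_smul, mul_pow, Real.norm_eq_abs, sq_abs]
  have hax : ⟪a, x₀⟫ = ⟪a, xb⟫ := by rw [hxbe]
  have key : c * ⟪a, xb⟫ - c * b + c ^ 2 * ‖a‖ ^ 2 / (2 * α)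
      = -((t / ‖a‖ ^ 2) * (1 - t / (2 * α)) * (b - ⟪a, xb⟫) ^ 2) := by
    rw [hc]
    field_simp
    ring
  have hu := hup z
  rw [e1, e3, hax] at hu
  simp only [breg]
  linarith [hu, e2, key]
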